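/- Let n ≥ 1 be an integer, m = 2n, and ω = exp(2πi/m) ∈ ℂ the principal m-th root of unity. Let g : ℤ → ℝ satisfy g_j ≥ 0 for all j, with (g_j)_{j∈ℤ} summable and (j(j−1)g_j)_{j∈ℤ} summable; write g''(1) := ∑_{j∈ℤ} j(j−1)g_j. Let ĝ : ℤ → ℝ vanish outside {−n+1, …, n} and satisfy the interpolation conditions ∑_{j=−n+1}^{n} ĝ_j ω^{i j} = ∑_{j∈ℤ} g_j ω^{i j} for every i ∈ {−n+1, …, n}; write ĝ''(1) := ∑_{j=−n+1}^{n} j(j−1) ĝ_j. Then: g''(1) ≥ 0; g''(1) − ĝ''(1) ≥ 2n·(∑_{j ≤ −n} g_j + ∑_{j ≥ n+1} g_j); and for every j ∈ {−n+1, …, n}, 0 ≤ ĝ_j − g_j ≤ (1/(2n))·(g''(1) − ĝ''(1)). -/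

import Mathlib

open scoped Real


section InterpAux

lemma interpAux_omega_zpow_eq_one_iff (n : ℕ) (hn : 1 ≤ n)
    (ω : ℂ) (hω : ω = Complex.exp (2 * π * Complex.I / (2 * n))) (d : ℤ) :
    ω ^ d = 1 ↔ (2 * (n : ℤ)) ∣ d := by
  have hnC : (n:ℂ) ≠ 0 := Nat.cast_ne_zero.mpr (by omega)
  have hpi : (π:ℂ) ≠ 0 := Complex.ofReal_ne_zero.mpr Real.pi_ne_zero
  have h2pi : (2 * π * Complex.I : ℂ) ≠ 0 := by
    simp [hpi, Complex.I_ne_zero]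
  rw [hω, ← Complex.exp_int_mul, Complex.exp_eq_one_iff]
  constructor
  · rintro ⟨k, hk⟩
    refine ⟨k, ?_⟩
    have h' : (d:ℂ) * (2*π*Complex.I) = (2*n*k) * (2*π*Complex.I) := by
      field_simp at hk
      linear_combination (2*π*Complex.I) * hk
    have := mul_right_cancel₀ h2pi h'
    exact_mod_cast this
  · rintro ⟨k, rfl⟩
    refine ⟨k, ?_⟩
    push_cast
    field_simp

lemma interpAux_root_sum (n : ℕ) (hn : 1 ≤ n) (ω : ℂ)
    (hone : ∀ d : ℤ, ω ^ d = 1 ↔ (2 * (n : ℤ)) ∣ d) (d : ℤ) :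
    ∑ i ∈ Finset.Icc (-(n : ℤ) + 1) (n : ℤ), ω ^ (i * d) =
      if (2 * (n:ℤ)) ∣ d then (2 * (n : ℕ) : ℂ) else 0 := by
  have hcard : (Finset.Icc (-(n : ℤ) + 1) (n : ℤ)).card = 2 * n := by
    rw [Int.card_Icc]; omega
  by_cases hd : (2 * (n:ℤ)) ∣ d
  · rw [if_pos hd]
    have : ∀ i ∈ Finset.Icc (-(n : ℤ) + 1) (n : ℤ), ω ^ (i * d) = 1 := fun i _ =>
      (hone (i*d)).mpr (Dvd.dvd.mul_left hd i)
    rw [Finset.sum_congr rfl this, Finset.sum_const, hcard]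
    push_cast; ring
  · rw [if_neg hd]
    set S := ∑ i ∈ Finset.Icc (-(n : ℤ) + 1) (n : ℤ), ω ^ (i * d) with hS
    have hω1 : ω ^ d ≠ 1 := fun h => hd ((hone d).mp h)
    have hm1 : ω ^ (2*(n:ℤ)) = 1 := (hone _).mpr dvd_rfl
    have hω0 : ω ≠ 0 := by
      intro h
      rw [h, zero_zpow _ (by omega : (2*(n:ℤ)) ≠ 0)] at hm1
      exact one_ne_zero hm1.symm
    have key : ω ^ d * S = S := by
      rw [hS, Finset.mul_sum]
      have step1 : ∀ i : ℤ, ω ^ d * ω ^ (i * d) = ω ^ ((i+1) * d) := by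
        intro i
        rw [← zpow_add₀ hω0]
        ring_nf
      simp_rw [step1]
      have reidx : ∑ i ∈ Finset.Icc (-(n : ℤ) + 1) (n : ℤ), ω ^ ((i+1) * d)
          = ∑ i ∈ Finset.Icc (-(n : ℤ) + 2) ((n : ℤ)+1), ω ^ (i * d) := by
        rw [show Finset.Icc (-(n : ℤ) + 2) ((n : ℤ)+1)
            = Finset.map (addRightEmbedding 1) (Finset.Icc (-(n : ℤ) + 1) (n : ℤ)) by
          rw [Finset.map_add_right_Icc]; congr 1 <;> ring]
        rw [Finset.sum_map]
        rfl
      rw [reidx]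
      have e1 : Finset.Icc (-(n : ℤ) + 2) ((n : ℤ)+1)
          = insert ((n:ℤ)+1) (Finset.Icc (-(n : ℤ) + 2) (n : ℤ)) := by
        ext x; simp only [Finset.mem_Icc, Finset.mem_insert]; omega
      have e2 : Finset.Icc (-(n : ℤ) + 1) ((n : ℤ))
          = insert (-(n:ℤ)+1) (Finset.Icc (-(n : ℤ) + 2) (n : ℤ)) := by
        ext x; simp only [Finset.mem_Icc, Finset.mem_insert]; omega
      have h1 : ((n:ℤ)+1) ∉ Finset.Icc (-(n : ℤ) + 2) (n : ℤ) := by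
        simp only [Finset.mem_Icc]; omega
      have h2 : (-(n:ℤ)+1) ∉ Finset.Icc (-(n : ℤ) + 2) (n : ℤ) := by
        simp only [Finset.mem_Icc]; omega
      rw [e1, e2, Finset.sum_insert h1, Finset.sum_insert h2]
      congr 1
      have : ((n:ℤ)+1) * d = (-(n:ℤ)+1) * d + (2*(n:ℤ)) * d := by ring
      rw [this, zpow_add₀ hω0, zpow_mul ω (2*(n:ℤ)) d, hm1, one_zpow, mul_one]
    have : (ω ^ d - 1) * S = 0 := by
      rw [sub_mul, one_mul, key, sub_self]
    rcases mul_eq_zero.mp this with h | h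
    · exact absurd (sub_eq_zero.mp h) hω1
    · exact h

lemma interpAux_aliasing (n : ℕ) (hn : 1 ≤ n)
    (ω : ℂ) (hω : ω = Complex.exp (2 * π * Complex.I / (2 * n)))
    (g : ℤ → ℝ) (hgpos : ∀ j : ℤ, 0 ≤ g j) (hgsum : Summable g)
    (gh : ℤ → ℝ)
    (hinterp : ∀ i ∈ Finset.Icc (-(n : ℤ) + 1) (n : ℤ),
      ∑ j ∈ Finset.Icc (-(n : ℤ) + 1) (n : ℤ), (gh j : ℂ) * ω ^ (i * j) =
        ∑' j : ℤ, (g j : ℂ) * ω ^ (i * j))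
    (j₀ : ℤ) (hj₀ : j₀ ∈ Finset.Icc (-(n : ℤ) + 1) (n : ℤ)) :
    gh j₀ = ∑' k : ℤ, g (j₀ + 2 * n * k) := by
  have hone := interpAux_omega_zpow_eq_one_iff n hn ω hω
  have hm1 : ω ^ (2*(n:ℤ)) = 1 := (hone _).mpr dvd_rfl
  have hω0 : ω ≠ 0 := by
    intro h
    rw [h, zero_zpow _ (by omega : (2*(n:ℤ)) ≠ 0)] at hm1
    exact one_ne_zero hm1.symm
  have habs : ∀ e : ℤ, ‖ω ^ e‖ = 1 := by
    intro e
    have h1 : ‖ω‖ = 1 := by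
      have : ω = Complex.exp (((2*π/(2*n) : ℝ) : ℂ) * Complex.I) := by
        rw [hω]; push_cast; ring_nf
      rw [this, Complex.norm_exp_ofReal_mul_I]
    rw [norm_zpow, h1, one_zpow]
  set I := Finset.Icc (-(n : ℤ) + 1) (n : ℤ) with hI
  have hsummC' : ∀ i : ℤ, Summable fun l : ℤ => (g l : ℂ) * ω ^ (i * (l - j₀)) := by
    intro i
    apply Summable.of_norm_bounded hgsum
    intro l
    rw [norm_mul, habs, mul_one, Complex.norm_real, Real.norm_eq_abs,
      abs_of_nonneg (hgpos l)]
  have H : ∑ i ∈ I, ω ^ (-(i*j₀)) * (∑ j ∈ I, (gh j:ℂ) * ω^(i*j)) =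
      ∑ i ∈ I, ω ^ (-(i*j₀)) * ∑' l : ℤ, (g l:ℂ) * ω^(i*l) :=
    Finset.sum_congr rfl (fun i hi => by rw [hinterp i hi])
  have combine : ∀ i j : ℤ, ∀ c : ℂ, ω ^ (-(i*j₀)) * (c * ω^(i*j)) = c * ω^(i*(j-j₀)) := by
    intro i j c
    rw [mul_left_comm, ← zpow_add₀ hω0]
    congr 2
    ring
  have hLHS : ∑ i ∈ I, ω ^ (-(i*j₀)) * (∑ j ∈ I, (gh j:ℂ) * ω^(i*j)) =
      (2*(n:ℕ):ℂ) * (gh j₀ : ℂ) := by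
    have e1 : ∀ i ∈ I, ω ^ (-(i*j₀)) * (∑ j ∈ I, (gh j:ℂ) * ω^(i*j)) =
        ∑ j ∈ I, (gh j:ℂ) * ω^(i*(j-j₀)) := by
      intro i _
      rw [Finset.mul_sum]
      exact Finset.sum_congr rfl fun j _ => combine i j _
    rw [Finset.sum_congr rfl e1, Finset.sum_comm]
    have e2 : ∀ j ∈ I, ∑ i ∈ I, (gh j:ℂ) * ω^(i*(j-j₀)) =
        (gh j : ℂ) * (if (2*(n:ℤ)) ∣ (j - j₀) then (2*(n:ℕ):ℂ) else 0) := by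
      intro j _
      rw [← Finset.mul_sum, interpAux_root_sum n hn ω hone]
    rw [Finset.sum_congr rfl e2, Finset.sum_eq_single j₀]
    · simp [mul_comm]
    · intro b hb hbne
      rw [if_neg, mul_zero]
      intro hdvd
      apply hbne
      have hb' := Finset.mem_Icc.mp hb
      have hj' := Finset.mem_Icc.mp hj₀
      obtain ⟨c, hc⟩ := hdvd
      have hc0 : c = 0 := by
        rcases lt_trichotomy c 0 with h | h | h
        · nlinarith
        · exact h
        · nlinarith
      rw [hc0, mul_zero] at hc
      omega
    · intro h
      exact absurd hj₀ h
  have hRHS : ∑ i ∈ I, ω ^ (-(i*j₀)) * ∑' l : ℤ, (g l:ℂ) * ω^(i*l) =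
      (2*(n:ℕ):ℂ) * ∑' k : ℤ, (g (j₀ + 2*n*k) : ℂ) := by
    have e1 : ∀ i ∈ I, ω ^ (-(i*j₀)) * ∑' l : ℤ, (g l:ℂ) * ω^(i*l) =
        ∑' l : ℤ, (g l:ℂ) * ω^(i*(l-j₀)) := by
      intro i _
      rw [← tsum_mul_left]
      exact tsum_congr fun l => combine i l _
    rw [Finset.sum_congr rfl e1, ← Summable.tsum_finsetSum (fun i _ => hsummC' i)]
    have e2 : ∀ l : ℤ, ∑ i ∈ I, (g l:ℂ) * ω^(i*(l-j₀)) =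
        (2*(n:ℕ):ℂ) * (if (2*(n:ℤ)) ∣ (l - j₀) then (g l : ℂ) else 0) := by
      intro l
      rw [← Finset.mul_sum, interpAux_root_sum n hn ω hone]
      split_ifs <;> ring
    rw [tsum_congr e2, tsum_mul_left]
    congr 1
    have hinj : Function.Injective (fun k : ℤ => j₀ + 2*(n:ℤ)*k) := by
      intro a b hab
      simp only at hab
      have h1 : 2*(n:ℤ)*a = 2*(n:ℤ)*b := by omega
      exact mul_left_cancel₀ (by positivity : (2*(n:ℤ)) ≠ 0) h1
    rw [← Function.Injective.tsum_eq hinj]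
    · apply tsum_congr
      intro k
      rw [if_pos ⟨k, by ring⟩]
    · intro l hl
      simp only [Function.mem_support, ne_eq, ite_eq_right_iff, not_forall] at hl
      obtain ⟨⟨c, hc⟩, -⟩ := hl
      refine ⟨c, ?_⟩
      show j₀ + 2*(n:ℤ)*c = l
      omega
  rw [hLHS, hRHS] at H
  have h2n : (2*(n:ℕ):ℂ) ≠ 0 := by
    simp only [ne_eq, mul_eq_zero, Nat.cast_eq_zero]
    norm_num
    omega
  have := mul_left_cancel₀ h2n H
  rw [← Complex.ofReal_tsum] at this
  exact_mod_cast this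

lemma interpAux_partition_tsum (n : ℕ) (hn : 1 ≤ n) (f : ℤ → ℝ) (hf : Summable f) :
    ∑' l : ℤ, f l =
      ∑ j ∈ Finset.Icc (-(n : ℤ) + 1) (n : ℤ), ∑' k : ℤ, f (j + 2 * n * k) := by
  set I := Finset.Icc (-(n : ℤ) + 1) (n : ℤ) with hI
  set e : (↑I × ℤ) → ℤ := fun p => (p.1 : ℤ) + 2 * n * p.2 with he
  have hbij : Function.Bijective e := by
    constructor
    · rintro ⟨⟨j, hj⟩, k⟩ ⟨⟨j', hj'⟩, k'⟩ hab
      simp only [he] at hab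
      have hj1 := Finset.mem_Icc.mp hj
      have hj2 := Finset.mem_Icc.mp hj'
      have hdvd : (2*(n:ℤ)) ∣ (j - j') :=
        ⟨k' - k, by linarith [mul_sub (2*(n:ℤ)) k' k]⟩
      obtain ⟨c, hc⟩ := hdvd
      have hc0 : c = 0 := by
        rcases lt_trichotomy c 0 with h | h | h
        · nlinarith
        · exact h
        · nlinarith
      have hjj : j = j' := by rw [hc0, mul_zero] at hc; omega
      subst hjj
      have : 2*(n:ℤ)*k = 2*(n:ℤ)*k' := by omega
      have hk : k = k' := mul_left_cancel₀ (by positivity : (2*(n:ℤ)) ≠ 0) this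
      simp [hk]
    · intro l
      set M : ℤ := 2 * n with hM
      have hM0 : 0 < M := by positivity
      set r : ℤ := (l + n - 1) % M with hr
      set q : ℤ := (l + n - 1) / M with hq
      have hr0 : 0 ≤ r := Int.emod_nonneg _ (ne_of_gt hM0)
      have hr1 : r < M := Int.emod_lt_of_pos _ hM0
      have hdm : M * q + r = l + n - 1 := Int.mul_ediv_add_emod _ _
      refine ⟨⟨⟨r - n + 1, ?_⟩, q⟩, ?_⟩
      · rw [hI, Finset.mem_Icc]
        omega
      · show r - n + 1 + M * q = l
        linarith
  have h1 : ∑' l : ℤ, f l = ∑' p : ↑I × ℤ, f (e p) :=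
    ((Equiv.ofBijective e hbij).tsum_eq f).symm
  have hsumm : Summable fun p : ↑I × ℤ => f (e p) :=
    ((Equiv.ofBijective e hbij).summable_iff).mpr hf
  rw [h1, Summable.tsum_prod hsumm, tsum_fintype]
  exact Finset.sum_coe_sort I (fun j => ∑' k : ℤ, f (j + 2 * n * k))

end InterpAux

/-- Interpolation error bound (Lemma 3.1 of Bini–Meini–Meng): let `g(z) = ∑_j g_j zʲ`
have nonnegative coefficients, with `(g_j)` and `(j(j−1) g_j)` summable, and let
`gh(z) = ∑_{j=−n+1}^n gh_j zʲ` interpolate `g` at the `m = 2n` roots of unity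
`ω^i`, `i = −n+1, …, n`, where `ω = exp(2πi/m)`.  Then `g''(1) ≥ 0`,
`g''(1) − gh''(1) ≥ 2n (∑_{j < −n+1} g_j + ∑_{j > n} g_j)`, and
`0 ≤ gh_j − g_j ≤ (g''(1) − gh''(1)) / (2n)` for `j = −n+1, …, n`. -/
theorem interpolation_coefficient_bounds
    (n : ℕ) (hn : 1 ≤ n)
    (ω : ℂ) (hω : ω = Complex.exp (2 * π * Complex.I / (2 * n)))
    (g : ℤ → ℝ) (hgpos : ∀ j : ℤ, 0 ≤ g j)
    (hgsum : Summable g)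
    (hgsum2 : Summable fun j : ℤ => (j : ℝ) * ((j : ℝ) - 1) * g j)
    (gh : ℤ → ℝ)
    (hsupp : ∀ j : ℤ, j ∉ Finset.Icc (-(n : ℤ) + 1) (n : ℤ) → gh j = 0)
    (hinterp : ∀ i ∈ Finset.Icc (-(n : ℤ) + 1) (n : ℤ),
      ∑ j ∈ Finset.Icc (-(n : ℤ) + 1) (n : ℤ), (gh j : ℂ) * ω ^ (i * j) =
        ∑' j : ℤ, (g j : ℂ) * ω ^ (i * j)) :
    0 ≤ (∑' j : ℤ, (j : ℝ) * ((j : ℝ) - 1) * g j) ∧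
    (∑' j : ℤ, (j : ℝ) * ((j : ℝ) - 1) * g j) -
        (∑ j ∈ Finset.Icc (-(n : ℤ) + 1) (n : ℤ), (j : ℝ) * ((j : ℝ) - 1) * gh j) ≥
      2 * n * ((∑' j : {j : ℤ // j < -(n : ℤ) + 1}, g j) +
        (∑' j : {j : ℤ // (n : ℤ) < j}, g j)) ∧
    ∀ j ∈ Finset.Icc (-(n : ℤ) + 1) (n : ℤ),
      0 ≤ gh j - g j ∧
      gh j - g j ≤ 1 / (2 * n) *
        ((∑' j : ℤ, (j : ℝ) * ((j : ℝ) - 1) * g j) -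
          ∑ j ∈ Finset.Icc (-(n : ℤ) + 1) (n : ℤ), (j : ℝ) * ((j : ℝ) - 1) * gh j) := by
  have hnR : (1:ℝ) ≤ (n:ℝ) := by exact_mod_cast hn
  have h2n : (0:ℝ) < 2 * n := by linarith
  have hqpos : ∀ l : ℤ, (0:ℝ) ≤ (l:ℝ) * ((l:ℝ) - 1) := by
    intro l
    rcases le_or_gt l 0 with h | h
    · have h1 : (l:ℝ) ≤ 0 := by exact_mod_cast h
      nlinarith
    · have h1 : (1:ℝ) ≤ (l:ℝ) := by exact_mod_cast h
      nlinarith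
  have hgq : ∀ l : ℤ, 0 ≤ (l:ℝ) * ((l:ℝ) - 1) * g l := fun l =>
    mul_nonneg (hqpos l) (hgpos l)
  have claim1 : 0 ≤ ∑' j : ℤ, (j : ℝ) * ((j : ℝ) - 1) * g j := tsum_nonneg hgq
  -- summability facts
  have hinjf : ∀ j : ℤ, Function.Injective (fun k : ℤ => j + 2*(n:ℤ)*k) := by
    intro j a b hab
    simp only at hab
    have h1 : 2*(n:ℤ)*a = 2*(n:ℤ)*b := by omega
    exact mul_left_cancel₀ (by positivity : (2*(n:ℤ)) ≠ 0) h1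
  have hGS : ∀ j : ℤ, Summable fun k : ℤ => g (j + 2*(n:ℤ)*k) := fun j =>
    hgsum.comp_injective (hinjf j)
  have hQS : ∀ j : ℤ, Summable fun k : ℤ =>
      ((j + 2*(n:ℤ)*k : ℤ):ℝ) * (((j + 2*(n:ℤ)*k : ℤ):ℝ) - 1) * g (j + 2*(n:ℤ)*k) :=
    fun j => hgsum2.comp_injective (hinjf j)
  have hGS' : ∀ j : ℤ, Summable fun k : ℤ =>
      if k = 0 then (0:ℝ) else g (j + 2*(n:ℤ)*k) := by
    intro j
    apply Summable.of_nonneg_of_le _ _ (hGS j)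
    · intro k; split_ifs; exacts [le_rfl, hgpos _]
    · intro k; split_ifs; exacts [hgpos _, le_rfl]
  have hQS' : ∀ j : ℤ, Summable fun k : ℤ =>
      if k = 0 then (0:ℝ) else
        ((j + 2*(n:ℤ)*k : ℤ):ℝ) * (((j + 2*(n:ℤ)*k : ℤ):ℝ) - 1) * g (j + 2*(n:ℤ)*k) := by
    intro j
    apply Summable.of_nonneg_of_le _ _ (hQS j)
    · intro k; split_ifs; exacts [le_rfl, hgq _]
    · intro k; split_ifs; exacts [hgq _, le_rfl]
  have hDS : ∀ j : ℤ, Summable fun k : ℤ =>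
      if k = 0 then (0:ℝ) else
        (((j + 2*(n:ℤ)*k : ℤ):ℝ) * (((j + 2*(n:ℤ)*k : ℤ):ℝ) - 1) - (j:ℝ)*((j:ℝ)-1))
          * g (j + 2*(n:ℤ)*k) := by
    intro j
    apply Summable.congr ((hQS' j).sub ((hGS' j).mul_left ((j:ℝ)*((j:ℝ)-1))))
    intro k
    by_cases hk : k = 0
    · simp [hk]
    · simp only [if_neg hk]
      ring
  -- aliasing and splitting
  have halias : ∀ j ∈ Finset.Icc (-(n : ℤ) + 1) (n : ℤ),
      gh j = g j + ∑' k : ℤ, if k = 0 then (0:ℝ) else g (j + 2*(n:ℤ)*k) := by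
    intro j hj
    have h1 := interpAux_aliasing n hn ω hω g hgpos hgsum gh hinterp j hj
    rw [h1, Summable.tsum_eq_add_tsum_ite (hGS j) 0]
    norm_num
  have hQsplit : ∀ j : ℤ,
      (∑' k : ℤ, ((j + 2*(n:ℤ)*k : ℤ):ℝ) * (((j + 2*(n:ℤ)*k : ℤ):ℝ) - 1) * g (j + 2*(n:ℤ)*k))
        = (j:ℝ)*((j:ℝ)-1) * g j + ∑' k : ℤ, if k = 0 then (0:ℝ) else
            ((j + 2*(n:ℤ)*k : ℤ):ℝ) * (((j + 2*(n:ℤ)*k : ℤ):ℝ) - 1) * g (j + 2*(n:ℤ)*k) := by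
    intro j
    rw [Summable.tsum_eq_add_tsum_ite (hQS j) 0]
    norm_num
  -- the difference identity
  have keyD : (∑' j : ℤ, (j : ℝ) * ((j : ℝ) - 1) * g j) -
        (∑ j ∈ Finset.Icc (-(n : ℤ) + 1) (n : ℤ), (j : ℝ) * ((j : ℝ) - 1) * gh j)
      = ∑ j ∈ Finset.Icc (-(n : ℤ) + 1) (n : ℤ), ∑' k : ℤ,
          if k = 0 then (0:ℝ) else
            (((j + 2*(n:ℤ)*k : ℤ):ℝ) * (((j + 2*(n:ℤ)*k : ℤ):ℝ) - 1) - (j:ℝ)*((j:ℝ)-1))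
              * g (j + 2*(n:ℤ)*k) := by
    rw [interpAux_partition_tsum n hn (fun l => (l:ℝ)*((l:ℝ)-1)*g l) hgsum2,
      ← Finset.sum_sub_distrib]
    apply Finset.sum_congr rfl
    intro j hj
    rw [hQsplit j, halias j hj]
    have e1 : ∑' k : ℤ,
        ((if k = 0 then (0:ℝ) else
            ((j + 2*(n:ℤ)*k : ℤ):ℝ) * (((j + 2*(n:ℤ)*k : ℤ):ℝ) - 1) * g (j + 2*(n:ℤ)*k))
          - (j:ℝ)*((j:ℝ)-1) * (if k = 0 then (0:ℝ) else g (j + 2*(n:ℤ)*k)))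
        = ∑' k : ℤ, if k = 0 then (0:ℝ) else
            (((j + 2*(n:ℤ)*k : ℤ):ℝ) * (((j + 2*(n:ℤ)*k : ℤ):ℝ) - 1) - (j:ℝ)*((j:ℝ)-1))
              * g (j + 2*(n:ℤ)*k) := by
      apply tsum_congr
      intro k
      by_cases hk : k = 0
      · simp [hk]
      · simp only [if_neg hk]; ring
    rw [← e1, Summable.tsum_sub (hQS' j) ((hGS' j).mul_left ((j:ℝ)*((j:ℝ)-1))), tsum_mul_left]
    ring
  -- pointwise key inequality
  have hkey : ∀ j ∈ Finset.Icc (-(n : ℤ) + 1) (n : ℤ), ∀ k : ℤ, k ≠ 0 →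
      2*(n:ℝ) ≤ ((j + 2*(n:ℤ)*k : ℤ):ℝ) * (((j + 2*(n:ℤ)*k : ℤ):ℝ) - 1) - (j:ℝ)*((j:ℝ)-1) := by
    intro j hj k hk
    have hb := Finset.mem_Icc.mp hj
    have hn' : (1:ℤ) ≤ (n:ℤ) := by exact_mod_cast hn
    have hZ : 2*(n:ℤ) ≤ (j + 2*(n:ℤ)*k) * ((j + 2*(n:ℤ)*k) - 1) - j*(j-1) := by
      rcases lt_or_gt_of_ne hk with h | h
      · have hA : 2*(n:ℤ) ≤ -(2*(n:ℤ)*k) := by nlinarith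
        have hB : 1 ≤ -(2*j - 1 + 2*(n:ℤ)*k) := by linarith [hb.2]
        nlinarith [mul_nonneg (by linarith : (0:ℤ) ≤ -(2*(n:ℤ)*k) - 2*n)
          (by linarith : (0:ℤ) ≤ -(2*j - 1 + 2*(n:ℤ)*k) - 1)]
      · have hA : 2*(n:ℤ) ≤ 2*(n:ℤ)*k := by nlinarith
        have hB : 1 ≤ 2*j - 1 + 2*(n:ℤ)*k := by linarith [hb.1]
        nlinarith [mul_nonneg (by linarith : (0:ℤ) ≤ 2*(n:ℤ)*k - 2*n)
          (by linarith : (0:ℤ) ≤ (2*j - 1 + 2*(n:ℤ)*k) - 1)]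
    have : ((2*(n:ℤ) : ℤ) : ℝ) ≤ (((j + 2*(n:ℤ)*k) * ((j + 2*(n:ℤ)*k) - 1) - j*(j-1) : ℤ) : ℝ) := by exact_mod_cast hZ
    push_cast at this ⊢
    linarith
  -- nonnegativity of the U and T sums
  have hT0 : ∀ j : ℤ, 0 ≤ ∑' k : ℤ, if k = 0 then (0:ℝ) else g (j + 2*(n:ℤ)*k) := by
    intro j
    apply tsum_nonneg
    intro k
    split_ifs
    exacts [le_rfl, hgpos _]
  have hU0 : ∀ j ∈ Finset.Icc (-(n : ℤ) + 1) (n : ℤ),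
      0 ≤ ∑' k : ℤ, if k = 0 then (0:ℝ) else
        (((j + 2*(n:ℤ)*k : ℤ):ℝ) * (((j + 2*(n:ℤ)*k : ℤ):ℝ) - 1) - (j:ℝ)*((j:ℝ)-1))
          * g (j + 2*(n:ℤ)*k) := by
    intro j hj
    apply tsum_nonneg
    intro k
    by_cases hk : k = 0
    · simp [hk]
    · simp only [if_neg hk]
      exact mul_nonneg (by linarith [hkey j hj k hk]) (hgpos _)
  -- U bounds T from above
  have hUB : ∀ j ∈ Finset.Icc (-(n : ℤ) + 1) (n : ℤ),
      2*(n:ℝ) * (∑' k : ℤ, if k = 0 then (0:ℝ) else g (j + 2*(n:ℤ)*k))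
        ≤ ∑' k : ℤ, if k = 0 then (0:ℝ) else
            (((j + 2*(n:ℤ)*k : ℤ):ℝ) * (((j + 2*(n:ℤ)*k : ℤ):ℝ) - 1) - (j:ℝ)*((j:ℝ)-1))
              * g (j + 2*(n:ℤ)*k) := by
    intro j hj
    rw [← tsum_mul_left]
    apply Summable.tsum_le_tsum _ ((hGS' j).mul_left _) (hDS j)
    intro k
    by_cases hk : k = 0
    · simp [hk]
    · simp only [if_neg hk]
      exact mul_le_mul_of_nonneg_right (hkey j hj k hk) (hgpos _)
  -- tails identity
  have htails : (∑' j : {j : ℤ // j < -(n : ℤ) + 1}, g j) +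
      (∑' j : {j : ℤ // (n : ℤ) < j}, g j)
      = ∑ j ∈ Finset.Icc (-(n : ℤ) + 1) (n : ℤ),
          ∑' k : ℤ, if k = 0 then (0:ℝ) else g (j + 2*(n:ℤ)*k) := by
    have htot : ∑' l : ℤ, g l = ∑ j ∈ Finset.Icc (-(n : ℤ) + 1) (n : ℤ),
        (g j + ∑' k : ℤ, if k = 0 then (0:ℝ) else g (j + 2*(n:ℤ)*k)) := by
      rw [interpAux_partition_tsum n hn g hgsum]
      apply Finset.sum_congr rfl
      intro j _
      rw [Summable.tsum_eq_add_tsum_ite (hGS j) 0]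
      norm_num
    have hcompl : (∑ j ∈ Finset.Icc (-(n : ℤ) + 1) (n : ℤ), g j) +
        ∑' x : ↑((Finset.Icc (-(n : ℤ) + 1) (n : ℤ) : Finset ℤ) : Set ℤ)ᶜ, g x
        = ∑' l : ℤ, g l := Summable.sum_add_tsum_compl hgsum
    have hset : ((Finset.Icc (-(n : ℤ) + 1) (n : ℤ) : Finset ℤ) : Set ℤ)ᶜ
        = Set.Iio (-(n:ℤ)+1) ∪ Set.Ioi (n:ℤ) := by
      rw [Finset.coe_Icc]
      ext x
      simp only [Set.mem_compl_iff, Set.mem_Icc, Set.mem_union, Set.mem_Iio, Set.mem_Ioi]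
      omega
    have hdisj : Disjoint (Set.Iio (-(n:ℤ)+1)) (Set.Ioi (n:ℤ)) := by
      rw [Set.disjoint_left]
      intro x hx hx'
      simp only [Set.mem_Iio] at hx
      simp only [Set.mem_Ioi] at hx'
      omega
    have hsplit : ∑' x : ↑((Finset.Icc (-(n : ℤ) + 1) (n : ℤ) : Finset ℤ) : Set ℤ)ᶜ, g x
        = (∑' j : {j : ℤ // j < -(n : ℤ) + 1}, g j) +
          (∑' j : {j : ℤ // (n : ℤ) < j}, g j) := by
      rw [hset, Summable.tsum_union_disjoint hdisj (hgsum.subtype _) (hgsum.subtype _)]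
      rfl
    rw [Finset.sum_add_distrib] at htot
    rw [hsplit] at hcompl
    linarith
  refine ⟨claim1, ?_, ?_⟩
  · rw [ge_iff_le, htails, keyD, Finset.mul_sum]
    exact Finset.sum_le_sum hUB
  · intro j hj
    have hTj : gh j - g j = ∑' k : ℤ, if k = 0 then (0:ℝ) else g (j + 2*(n:ℤ)*k) := by
      rw [halias j hj]; ring
    constructor
    · rw [hTj]; exact hT0 j
    · have h1 : (∑' k : ℤ, if k = 0 then (0:ℝ) else
          (((j + 2*(n:ℤ)*k : ℤ):ℝ) * (((j + 2*(n:ℤ)*k : ℤ):ℝ) - 1) - (j:ℝ)*((j:ℝ)-1))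
            * g (j + 2*(n:ℤ)*k))
          ≤ (∑' j : ℤ, (j : ℝ) * ((j : ℝ) - 1) * g j) -
            (∑ j ∈ Finset.Icc (-(n : ℤ) + 1) (n : ℤ), (j : ℝ) * ((j : ℝ) - 1) * gh j) := by
        rw [keyD]
        exact Finset.single_le_sum hU0 hj
      have h2 := le_trans (hUB j hj) h1
      rw [hTj, one_div, inv_mul_eq_div]
      rw [le_div_iff₀' h2n]
      exact h2
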